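/- arXiv:2402.06144 — 7 statements merged into one kernel-verified Lean document; each statement's English description precedes it below -/
import Mathlib

section
/- Let Γ be a group acting by homeomorphisms on a nonempty perfect compact metric space (M, d), and let D > 0 be a pair-separation constant for the action. Then for every ε with 0 < ε < D/5 and every conical limit point z ∈ M, there exist α ∈ Γ and open sets V ⊆ W ⊆ M, both containing z, such that: (1) diam(W) ≤ ε; (2) diam(α⁻¹·W) > 4ε; and (3) the closure of N_{2ε}(α⁻¹·V) is contained in α⁻¹·W. (Abstract form of Lemma 3.1, 'Expanded neighborhoods'.) -/
open Metric Filter Topology Pointwise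

/-- Abstract form of Lemma 3.1 ('Expanded neighborhoods'): a group Γ acting by
homeomorphisms on a nonempty perfect compact metric space with pair-separation
constant `D` admits expanded neighborhoods around every conical limit point. -/
theorem expanded_neighborhoods
    {Γ M : Type*} [Group Γ] [MetricSpace M] [CompactSpace M] [Nonempty M]
    [MulAction Γ M] [ContinuousConstSMul Γ M]
    (hperfect : ∀ x : M, (𝓝[≠] x).NeBot)
    (D : ℝ) (hD : 0 < D)
    (hsep : ∀ x y : M, x ≠ y → ∃ g : Γ, D < dist (g • x) (g • y))
    (ε : ℝ) (hε0 : 0 < ε) (hεD : ε < D / 5)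
    (z : M)
    (hconical : ∃ a b : M, a ≠ b ∧ ∃ g : ℕ → Γ,
      Tendsto (fun i => g i • z) atTop (𝓝 b) ∧
      ∀ K : Set M, IsCompact K → K ⊆ {z}ᶜ →
        TendstoUniformlyOn (fun i x => g i • x) (fun _ => a) atTop K) :
    ∃ (α : Γ) (V W : Set M), IsOpen V ∧ IsOpen W ∧ z ∈ V ∧ z ∈ W ∧ V ⊆ W ∧
      diam W ≤ ε ∧ 4 * ε < diam (α⁻¹ • W) ∧
      closure (thickening (2 * ε) (α⁻¹ • V)) ⊆ α⁻¹ • W := by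
  obtain ⟨a, b, hab, g, hgz, hgK⟩ := hconical
  obtain ⟨h, hh⟩ := hsep a b hab
  have h5ε : 5 * ε < D := by linarith
  set a' := h • a with ha'
  set b' := h • b with hb'
  have hab' : 5 * ε < dist a' b' := lt_trans h5ε hh
  -- the small neighborhood W
  set W : Set M := ball z (ε / 3) with hWdef
  have hWopen : IsOpen W := isOpen_ball
  have hzW : z ∈ W := mem_ball_self (by linarith)
  have hdiamW : diam W ≤ ε :=
    le_trans (diam_ball (by positivity)) (by linarith)
  -- pick w ∈ W, w ≠ z
  have hWz : W ∩ {z}ᶜ ∈ 𝓝[≠] z :=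
    inter_mem (mem_nhdsWithin_of_mem_nhds (hWopen.mem_nhds hzW)) self_mem_nhdsWithin
  obtain ⟨w, hwW, hwz⟩ := (hperfect z).nonempty_of_mem hWz
  -- the functions f i = (h * g i) • ·
  have hmul : ∀ (i : ℕ) (x : M), (h * g i) • x = h • (g i • x) := fun i x => mul_smul h (g i) x
  have hhuc : UniformContinuous (fun x : M => h • x) :=
    CompactSpace.uniformContinuous_of_continuous (continuous_const_smul h)
  have huniv : ∀ K : Set M, IsCompact K → K ⊆ {z}ᶜ →
      TendstoUniformlyOn (fun i x => (h * g i) • x) (fun _ => a') atTop K := by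
    intro K hK hKz
    have := hhuc.comp_tendstoUniformlyOn (hgK K hK hKz)
    simpa [Function.comp_def, hmul] using this
  -- convergence of f i z to b'
  have hfz : Tendsto (fun i => (h * g i) • z) atTop (𝓝 b') := by
    have : Tendsto (fun i => h • (g i • z)) atTop (𝓝 (h • b)) :=
      ((continuous_const_smul h).tendsto b).comp hgz
    simpa [hmul] using this
  -- convergence of f i w to a'
  have hfw : Tendsto (fun i => (h * g i) • w) atTop (𝓝 a') := by
    have h1 := huniv {w} isCompact_singleton (Set.singleton_subset_iff.mpr hwz)
    have := (EMetric.tendstoUniformlyOn_iff.mp h1)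
    rw [Metric.tendsto_nhds]
    intro δ hδ
    have := (Metric.tendstoUniformlyOn_iff.mp h1) δ hδ
    filter_upwards [this] with i hi
    have := hi w (Set.mem_singleton w)
    rwa [dist_comm]
  -- the complement of W
  set K₀ : Set M := Wᶜ with hK₀def
  have hK₀c : IsCompact K₀ := hWopen.isClosed_compl.isCompact
  have hK₀z : K₀ ⊆ {z}ᶜ := fun x hx hxz =>
    hx (Set.mem_singleton_iff.mp hxz ▸ hzW)
  have hK₀u := Metric.tendstoUniformlyOn_iff.mp (huniv K₀ hK₀c hK₀z) ε hε0
  -- dist (f i w) (f i z) → dist a' b'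
  have hdist : Tendsto (fun i => dist ((h * g i) • w) ((h * g i) • z)) atTop
      (𝓝 (dist a' b')) := hfw.dist hfz
  have hEv1 : ∀ᶠ i in atTop, dist ((h * g i) • z) b' < ε :=
    (Metric.tendsto_nhds.mp hfz) ε hε0
  have hEv2 : ∀ᶠ i in atTop, 4 * ε < dist ((h * g i) • w) ((h * g i) • z) :=
    hdist.eventually_const_lt (by linarith)
  obtain ⟨i, h1, h2, h3⟩ := (hEv1.and (hEv2.and hK₀u)).exists
  -- definitions of α and V
  refine ⟨(h * g i)⁻¹, W ∩ (fun x => (h * g i) • x) ⁻¹' ball b' ε, W, ?_, hWopen, ?_, hzW,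
    Set.inter_subset_left, hdiamW, ?_, ?_⟩
  · exact hWopen.inter ((continuous_const_smul (h * g i)).isOpen_preimage _ isOpen_ball)
  · exact ⟨hzW, h1⟩
  · -- diameter estimate
    rw [inv_inv]
    have hb1 : (h * g i) • w ∈ (h * g i) • W := Set.smul_mem_smul_set hwW
    have hb2 : (h * g i) • z ∈ (h * g i) • W := Set.smul_mem_smul_set hzW
    calc 4 * ε < dist ((h * g i) • w) ((h * g i) • z) := h2
      _ ≤ diam ((h * g i) • W) := dist_le_diam_of_mem isBounded_of_compactSpace hb1 hb2
  · -- expansion estimate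
    rw [inv_inv]
    set V : Set M := W ∩ (fun x => (h * g i) • x) ⁻¹' ball b' ε with hVdef
    refine (closure_thickening_subset_cthickening _ _).trans ?_
    intro x hx
    by_contra hxW
    -- x is in the image of the complement of W
    have hxK : x ∈ (h * g i) • K₀ := by
      rw [hK₀def, Set.smul_set_compl]
      exact hxW
    obtain ⟨y, hyK, rfl⟩ := hxK
    have hxa : dist a' ((h * g i) • y) < ε := h3 y hyK
    -- every point of (h * g i) • V is ε-close to b'
    have hfar : ∀ u ∈ (h * g i) • V, 3 * ε ≤ dist ((h * g i) • y) u := by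
      rintro u ⟨v, hv, rfl⟩
      have hvb : dist ((h * g i) • v) b' < ε := hv.2
      have := dist_triangle4 a' ((h * g i) • y) ((h * g i) • v) b'
      have h4 := dist_triangle a' b' b'
      nlinarith [dist_triangle a' ((h * g i) • y) b',
        dist_triangle ((h * g i) • y) ((h * g i) • v) b', dist_nonneg (x := a') (y := b')]
    have hne : ((h * g i) • V).Nonempty := ⟨(h * g i) • z, Set.smul_mem_smul_set ⟨hzW, h1⟩⟩
    rw [mem_cthickening_iff] at hx
    have hge : ENNReal.ofReal (3 * ε) ≤ Metric.infEDist ((h * g i) • y) ((h * g i) • V) := by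
      rw [Metric.le_infEDist]
      intro u hu
      rw [edist_dist]
      exact ENNReal.ofReal_le_ofReal (hfar u hu)
    have := hge.trans hx
    rw [ENNReal.ofReal_le_ofReal_iff (by linarith)] at this
    linarith
end

section
/- Let Γ be a group acting by homeomorphisms on a compact metric space (M, d). Let p ∈ M, let Γ_p = {h ∈ Γ : h·p = p} be its stabilizer, and assume Γ_p acts properly discontinuously on M ∖ {p}. Suppose K ⊆ M ∖ {p} is a compact set with Γ_p·K = M ∖ {p}, and D_Π > 0 satisfies D_Π < diam(K) and d(x, p) > D_Π for every x ∈ K. Then for every ε with 0 < ε < D_Π/5 and every g ∈ Γ, writing q = g·p, there exist open sets V̂ ⊆ Ŵ ⊆ M ∖ {p} and a finite subset F of the left coset gΓ_p = {g·h : h ∈ Γ_p} such that: (1) diam(Ŵ) > 4ε; (2) the closure of N_{2ε}(V̂) is contained in Ŵ; (3) p does not lie in the closure of N_ε(Ŵ); (4) the set V(q) := {q} ∪ ⋃_{α ∈ gΓ_p ∖ F} α·V̂ is a neighborhood of q; (5) the set W(q) := {q} ∪ ⋃_{α ∈ gΓ_p ∖ F} α·Ŵ contains V(q); and (6) diam(W(q))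 ≤ ε. (Abstract form of Lemma 3.2, 'Parabolic points'.) -/
open Metric Filter Topology Pointwise

/-- Abstract form of Lemma 3.2 ('Parabolic points'): around each translate `q = g • p`
of a bounded parabolic point `p` there are adapted neighborhoods built from a
fundamental compact set `K` for the stabilizer of `p`. -/
theorem parabolic_points
    {Γ M : Type*} [Group Γ] [MetricSpace M] [CompactSpace M]
    [MulAction Γ M] [ContinuousConstSMul Γ M]
    (p : M)
    (hpd : ∀ L : Set M, IsCompact L → L ⊆ {p}ᶜ →
      {h : Γ | h • p = p ∧ ((h • L) ∩ L).Nonempty}.Finite)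
    (K : Set M) (hK : IsCompact K) (hKp : K ⊆ {p}ᶜ)
    (hKcover : ∀ x : M, x ≠ p → ∃ h : Γ, h • p = p ∧ x ∈ h • K)
    (Dpi : ℝ) (hDpi : 0 < Dpi) (hDpidiam : Dpi < diam K)
    (hDpidist : ∀ x ∈ K, Dpi < dist x p)
    (ε : ℝ) (hε0 : 0 < ε) (hεD : ε < Dpi / 5) (g : Γ) :
    ∃ (Vh Wh : Set M) (F : Set Γ),
      F.Finite ∧ F ⊆ {γ : Γ | ∃ h : Γ, h • p = p ∧ γ = g * h} ∧
      IsOpen Vh ∧ IsOpen Wh ∧ Vh ⊆ Wh ∧ Wh ⊆ {p}ᶜ ∧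
      4 * ε < diam Wh ∧
      closure (thickening (2 * ε) Vh) ⊆ Wh ∧
      p ∉ closure (thickening ε Wh) ∧
      ∃ Vq Wq : Set M,
        Vq = insert (g • p)
          (⋃ α ∈ {γ : Γ | ∃ h : Γ, h • p = p ∧ γ = g * h} \ F, α • Vh) ∧
        Wq = insert (g • p)
          (⋃ α ∈ {γ : Γ | ∃ h : Γ, h • p = p ∧ γ = g * h} \ F, α • Wh) ∧
        Vq ∈ 𝓝 (g • p) ∧ Vq ⊆ Wq ∧ diam Wq ≤ ε := by
  have hε5 : 5 * ε < Dpi := by linarith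
  -- the three sets built from K
  set Vh : Set M := thickening (ε / 2) K with hVh
  set Wh : Set M := thickening (3 * ε) K with hWh
  set L : Set M := cthickening (4 * ε) K with hLdef
  -- basic facts
  have hpL : p ∉ L := by
    intro hp
    have : p ∈ thickening Dpi K :=
      cthickening_subset_thickening' hDpi (by linarith) K hp
    obtain ⟨z, hz, hdz⟩ := mem_thickening_iff.1 this
    have := hDpidist z hz
    rw [dist_comm] at hdz
    linarith
  have hLcl : IsClosed L := isClosed_cthickening
  have hLcpt : IsCompact L := hLcl.isCompact
  have hLp : L ⊆ {p}ᶜ := fun x hx hxp => hpL (by simpa [Set.mem_singleton_iff.1 hxp] using hx)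
  have hVW : Vh ⊆ Wh := thickening_mono (by linarith) K
  have hWL : Wh ⊆ L := thickening_subset_cthickening_of_le (by linarith) K
  have hKV : K ⊆ Vh := self_subset_thickening (by linarith) K
  have hKL : K ⊆ L := self_subset_cthickening K
  have hWp : Wh ⊆ {p}ᶜ := fun x hx => hLp (hWL hx)
  have hdiamW : 4 * ε < diam Wh := by
    have h1 : diam K ≤ diam Wh :=
      diam_mono (hKV.trans hVW) (isCompact_univ.isBounded.subset (Set.subset_univ _))
    linarith
  have hclV : closure (thickening (2 * ε) Vh) ⊆ Wh := by
    have h1 : thickening (2 * ε) Vh ⊆ thickening (2 * ε + ε / 2) K :=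
      thickening_thickening_subset _ _ _
    refine (closure_mono h1).trans ?_
    refine (closure_thickening_subset_cthickening _ _).trans ?_
    exact cthickening_subset_thickening' (by linarith) (by linarith) K
  have hpW : p ∉ closure (thickening ε Wh) := by
    intro hp
    have h1 : thickening ε Wh ⊆ thickening (ε + 3 * ε) K :=
      thickening_thickening_subset _ _ _
    have h2 : closure (thickening ε Wh) ⊆ L := by
      refine (closure_mono h1).trans ?_
      refine (closure_thickening_subset_cthickening _ _).trans ?_
      exact cthickening_mono (by linarith) K
    exact hpL (h2 hp)
  -- choose δ with g • ball p δ ⊆ ball (g • p) (ε/2)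
  have hcont : Continuous fun x : M => g • x := continuous_const_smul g
  obtain ⟨δ, hδ0, hδball⟩ : ∃ δ > 0, ∀ y ∈ ball p δ, g • y ∈ ball (g • p) (ε / 2) := by
    have : (fun x : M => g • x) ⁻¹' ball (g • p) (ε / 2) ∈ 𝓝 p :=
      hcont.continuousAt.preimage_mem_nhds (ball_mem_nhds _ (by linarith))
    obtain ⟨δ, hδ0, hδ⟩ := Metric.mem_nhds_iff.1 this
    exact ⟨δ, hδ0, fun y hy => hδ hy⟩
  -- finite "bad" set in the stabilizer
  set Fδ : Set Γ := {h : Γ | h • p = p ∧ ((h • L) ∩ (ball p δ)ᶜ).Nonempty} with hFδdef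
  have hFδfin : Fδ.Finite := by
    set Lbig : Set M := L ∪ (ball p δ)ᶜ with hLbig
    have hLbigcpt : IsCompact Lbig := (hLcl.union isOpen_ball.isClosed_compl).isCompact
    have hLbigp : Lbig ⊆ {p}ᶜ := by
      rintro x (hx | hx)
      · exact hLp hx
      · intro hxp
        rw [Set.mem_singleton_iff] at hxp
        subst hxp
        exact hx (mem_ball_self hδ0)
    refine (hpd Lbig hLbigcpt hLbigp).subset ?_
    rintro h ⟨hp, x, hx1, hx2⟩
    exact ⟨hp, x, Set.smul_set_mono Set.subset_union_left hx1, Set.subset_union_right hx2⟩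
  -- key smallness: translates outside Fδ land in ball p δ
  have hsmall : ∀ h : Γ, h • p = p → h ∉ Fδ → h • L ⊆ ball p δ := by
    intro h hp hnF x hx
    by_contra hxb
    exact hnF ⟨hp, x, hx, hxb⟩
  set F : Set Γ := (fun h => g * h) '' Fδ with hFdef
  refine ⟨Vh, Wh, F, hFδfin.image _, ?_, isOpen_thickening, isOpen_thickening, hVW, hWp,
    hdiamW, hclV, hpW, ?_⟩
  · rintro γ ⟨h, hh, rfl⟩
    exact ⟨h, hh.1, rfl⟩
  -- the sets Vq, Wq
  set coset : Set Γ := {γ : Γ | ∃ h : Γ, h • p = p ∧ γ = g * h} with hcoset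
  set Vq : Set M := insert (g • p) (⋃ α ∈ coset \ F, α • Vh) with hVq
  set Wq : Set M := insert (g • p) (⋃ α ∈ coset \ F, α • Wh) with hWq
  refine ⟨Vq, Wq, rfl, rfl, ?_, ?_, ?_⟩
  · -- Vq is a neighborhood of g • p
    -- the compact set of bad translates
    set C : Set M := ⋃ h ∈ Fδ, h • L with hC
    have hCcl : IsClosed C := by
      refine hFδfin.isClosed_biUnion fun h _ => ?_
      have : h • L = (fun x => h • x) '' L := rfl
      rw [this]
      exact (hLcpt.image (continuous_const_smul h)).isClosed
    have hpC : p ∉ C := by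
      rintro hp
      simp only [hC, Set.mem_iUnion] at hp
      obtain ⟨h, hh, hp⟩ := hp
      obtain ⟨x, hx, hxp⟩ := hp
      have : x = p := by
        have := hh.1
        rw [← this] at hxp
        exact smul_left_cancel h hxp
      exact hLp hx (by simp [this])
    obtain ⟨δ', hδ'0, hδ'C⟩ : ∃ δ' > 0, ball p δ' ⊆ Cᶜ := by
      obtain ⟨δ', hδ'0, hδ'⟩ := Metric.mem_nhds_iff.1 (hCcl.isOpen_compl.mem_nhds hpC)
      exact ⟨δ', hδ'0, hδ'⟩
    have hopen : IsOpen ((fun x => g • x) '' ball p δ') :=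
      (Homeomorph.smul g (α := M)).isOpenMap _ isOpen_ball
    refine Filter.mem_of_superset (hopen.mem_nhds ⟨p, mem_ball_self hδ'0, rfl⟩) ?_
    rintro _ ⟨y, hy, rfl⟩
    by_cases hyp : y = p
    · subst hyp; exact Set.mem_insert _ _
    · obtain ⟨h, hhp, hyK⟩ := hKcover y hyp
      have hhF : h ∉ Fδ := by
        intro hh
        exact (hδ'C hy) (Set.mem_biUnion hh (Set.smul_set_mono hKL hyK))
      have hα : (g * h) ∈ coset \ F := by
        constructor
        · exact ⟨h, hhp, rfl⟩
        · rintro ⟨h', hh', heq⟩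
          have : h' = h := mul_left_cancel heq
          subst this
          exact hhF hh'
      refine Set.mem_insert_iff.2 (Or.inr ?_)
      refine Set.mem_biUnion hα ?_
      rw [mul_smul]
      exact Set.smul_mem_smul_set (Set.smul_set_mono hKV hyK)
  · -- Vq ⊆ Wq
    refine Set.insert_subset_insert ?_
    exact Set.iUnion₂_mono fun α _ => Set.smul_set_mono hVW
  · -- diam Wq ≤ ε
    have hsub : Wq ⊆ closedBall (g • p) (ε / 2) := by
      rintro x (rfl | hx)
      · exact mem_closedBall_self (by linarith)
      · simp only [Set.mem_iUnion] at hx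
        obtain ⟨α, hα, hx⟩ := hx
        obtain ⟨⟨h, hhp, rfl⟩, hnF⟩ := hα
        have hhF : h ∉ Fδ := fun hh => hnF ⟨h, hh, rfl⟩
        rw [mul_smul] at hx
        obtain ⟨y, hy, rfl⟩ := hx
        have hyL : y ∈ ball p δ := hsmall h hhp hhF (Set.smul_set_mono hWL hy)
        exact ball_subset_closedBall (hδball y hyL)
    calc diam Wq ≤ diam (closedBall (g • p) (ε / 2)) :=
          diam_mono hsub (isCompact_univ.isBounded.subset (Set.subset_univ _))
      _ ≤ 2 * (ε / 2) := diam_closedBall (by linarith)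
      _ = ε := by ring
end

section
/- Let Γ be a group acting by homeomorphisms on a compact metric space (M, d). Let p ∈ M with stabilizer Γ_p = {h ∈ Γ : h·p = p}, and assume Γ_p acts properly discontinuously on M ∖ {p}. Let g ∈ Γ and q = g·p. Let V̂ ⊆ M be a set whose closure does not contain p, let F be a finite subset of the left coset gΓ_p = {g·h : h ∈ Γ_p}, and set V := {q} ∪ ⋃_{α ∈ gΓ_p ∖ F} α·V̂. Then for every η > 0 there exists r > 0 such that ⋃_{α ∈ gΓ_p ∖ F} α·N_r(V̂) ⊆ N_η(V). (Abstract form of Lemma 3.6, parabolic case.) -/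
open Metric Filter Topology Pointwise

/-- Abstract form of Lemma 3.6 (parabolic case): the union of translates of a small
thickening of `V̂` over the coset `gΓ_p ∖ F` is contained in the `η`-neighborhood
of `V = {q} ∪ ⋃_{α ∈ gΓ_p ∖ F} α • V̂`. -/
theorem parabolic_nbhds_continuous
    {Γ M : Type*} [Group Γ] [MetricSpace M] [CompactSpace M]
    [MulAction Γ M] [ContinuousConstSMul Γ M]
    (p : M)
    (hpd : ∀ L : Set M, IsCompact L → L ⊆ {p}ᶜ →
      {h : Γ | h • p = p ∧ ((h • L) ∩ L).Nonempty}.Finite)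
    (g : Γ) (Vh : Set M) (hVh : p ∉ closure Vh)
    (F : Set Γ) (hF : F.Finite)
    (hFsub : F ⊆ {γ : Γ | ∃ h : Γ, h • p = p ∧ γ = g * h})
    (V : Set M)
    (hV : V = insert (g • p)
      (⋃ α ∈ {γ : Γ | ∃ h : Γ, h • p = p ∧ γ = g * h} \ F, α • Vh))
    (η : ℝ) (hη : 0 < η) :
    ∃ r > 0,
      (⋃ α ∈ {γ : Γ | ∃ h : Γ, h • p = p ∧ γ = g * h} \ F, α • thickening r Vh) ⊆
        thickening η V := by
  classical
  have hVmem : ∀ α ∈ {γ : Γ | ∃ h : Γ, h • p = p ∧ γ = g * h} \ F, ∀ z ∈ Vh, α • z ∈ V := by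
    intro α hα z hz
    rw [hV]
    exact Set.mem_insert_iff.mpr (Or.inr (Set.mem_biUnion hα ⟨z, hz, rfl⟩))
  have hq : g • p ∈ V := by rw [hV]; exact Set.mem_insert _ _
  rcases Vh.eq_empty_or_nonempty with hVe | hVne
  · exact ⟨1, one_pos, by simp [hVe]⟩
  -- uniform continuity of each translation
  have hδ : ∀ γ : Γ, ∃ δ > 0, ∀ x y : M, dist x y < δ → dist (γ • x) (γ • y) < η := by
    intro γ
    have hu : UniformContinuous (fun x : M => γ • x) :=
      CompactSpace.uniformContinuous_of_continuous (continuous_const_smul γ)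
    rcases Metric.uniformContinuous_iff.mp hu η hη with ⟨δ, hδ0, hδ⟩
    exact ⟨δ, hδ0, fun x y h => hδ h⟩
  choose δ hδ0 hδ using hδ
  -- distance from p to Vh
  set d0 := Metric.infDist p Vh with hd0def
  have hd0 : 0 < d0 := by
    rw [hd0def, ← Metric.infDist_closure]
    by_contra hle
    push_neg at hle
    have : Metric.infDist p (closure Vh) = 0 :=
      le_antisymm hle Metric.infDist_nonneg
    exact hVh ((Metric.mem_closure_iff_infDist_zero hVne).mpr
      (by rwa [Metric.infDist_closure] at this))
  set K := closure (thickening (d0/2) Vh) with hKdef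
  have hpK : p ∉ K := by
    intro hp
    have h1 : K ⊆ thickening (3*d0/4) Vh := by
      refine (closure_thickening_subset_cthickening _ _).trans
        (cthickening_subset_thickening' (by linarith) (by linarith) _)
    have := (mem_thickening_iff_infDist_lt hVne).mp (h1 hp)
    rw [← hd0def] at this
    linarith
  set L := K ∪ (Metric.ball p (δ g))ᶜ with hLdef
  have hLc : IsCompact L :=
    (isClosed_closure.union (isOpen_ball.isClosed_compl)).isCompact
  have hLp : L ⊆ {p}ᶜ := by
    intro x hx hxp
    simp only [Set.mem_singleton_iff] at hxp
    subst hxp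
    rcases hx with hx | hx
    · exact hpK hx
    · exact hx (mem_ball_self (hδ0 g))
  have hS := hpd L hLc hLp
  set S := {h : Γ | h • p = p ∧ ((h • L) ∩ L).Nonempty} with hSdef
  set T : Finset Γ := insert 1 hS.toFinset with hTdef
  have hTne : T.Nonempty := ⟨1, Finset.mem_insert_self 1 _⟩
  set r := min (d0/2) (T.inf' hTne (fun h => δ (g*h))) with hrdef
  have hrpos : 0 < r := by
    apply lt_min (by linarith)
    rw [Finset.lt_inf'_iff]
    intro b _
    exact hδ0 _
  refine ⟨r, hrpos, ?_⟩
  intro x hx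
  simp only [Set.mem_iUnion] at hx
  obtain ⟨α, hα, hxα⟩ := hx
  obtain ⟨y, hy, rfl⟩ := hxα
  obtain ⟨h, hhp, rfl⟩ := hα.1
  obtain ⟨z, hz, hyz⟩ := mem_thickening_iff.mp hy
  by_cases hhS : h ∈ S
  · -- h in the finite bad set : use uniform continuity of α
    have hhT : h ∈ T := Finset.mem_insert_of_mem (hS.mem_toFinset.mpr hhS)
    have hrle : r ≤ δ (g * h) := (min_le_right _ _).trans (Finset.inf'_le _ hhT)
    have hd : dist ((g*h) • y) ((g*h) • z) < η := hδ (g*h) y z (hyz.trans_le hrle)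
    exact mem_thickening_iff.mpr ⟨(g*h) • z, hVmem _ hα z hz, hd⟩
  · -- h moves K into the small ball around p
    have hyK : y ∈ K := by
      have : y ∈ thickening (d0/2) Vh :=
        thickening_mono (min_le_left _ _) Vh hy
      exact subset_closure this
    have hhyL : h • y ∈ h • L := Set.smul_mem_smul_set (Or.inl hyK)
    have hball : h • y ∈ Metric.ball p (δ g) := by
      by_contra hnb
      exact hhS ⟨hhp, ⟨h • y, hhyL, Or.inr hnb⟩⟩
    have hd : dist (g • (h • y)) (g • p) < η := hδ g _ p (by simpa [dist_comm] using hball)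
    show (g * h) • y ∈ thickening η V
    rw [mul_smul]
    exact mem_thickening_iff.mpr ⟨g • p, hq, hd⟩
end

section
/- Let Γ be a group acting on a set M. Let Z be a finite subset of M, let P ⊆ Z be a distinguished subset of 'parabolic' vertices, and for each z ∈ Z let V(z), V̂(z) ⊆ M and L(z) ⊆ Γ be given. Assume: (a) the sets {V(z)}_{z ∈ Z} cover M; (b) for each z ∈ Z ∖ P, L(z) is a singleton {α_z} and V̂(z) = α_z⁻¹·V(z); (c) for each z ∈ P, V(z) = {z} ∪ ⋃_{α ∈ L(z)} α·V̂(z). Then for every ζ ∈ M there exists z_0 ∈ Z with ζ ∈ V(z_0), and at least one of the following holds: (i) there exist n ≥ 0, elements α_1, …, α_n ∈ Γ and z_1, …, z_n ∈ Z such that for each 1 ≤ k ≤ n one has α_k ∈ L(z_{k−1}), (α_1⋯α_k)⁻¹·ζ ∈ V(z_k), and V̂(z_{k−1}) ∩ V(z_k) ≠ ∅, and moreover z_n ∈ P and ζ = (α_1⋯α_n)·z_n; or (ii) there exist infinite sequences (α_k)_{k≥1} in Γ and (z_k)_{k≥1} in Z such that for every k ≥ 1 one has α_k ∈ L(z_{k−1}),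 (α_1⋯α_k)⁻¹·ζ ∈ V(z_k), and V̂(z_{k−1}) ∩ V(z_k) ≠ ∅. (Abstract form of Lemma 4.4: every point has a strict coding by the automaton.) -/
open Pointwise

/-- Abstract form of Lemma 4.4: every point of `M` has a strict coding by the
automaton, which is either parabolic (a finite coding terminating at a parabolic
vertex) or conical (an infinite coding). Here `g k` denotes the partial product
`α_1 ⋯ α_k`. -/
theorem codings_exist
    {Γ M : Type*} [Group Γ] [MulAction Γ M]
    (Z P : Finset M) (hPZ : P ⊆ Z)
    (V Vh : M → Set M) (L : M → Set Γ)
    (hcover : ∀ ζ : M, ∃ z ∈ Z, ζ ∈ V z)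
    (hconical : ∀ z ∈ Z, z ∉ P → ∃ αz : Γ, L z = {αz} ∧ Vh z = αz⁻¹ • V z)
    (hparabolic : ∀ z ∈ P, V z = insert z (⋃ α ∈ L z, α • Vh z)) :
    ∀ ζ : M, ∃ z₀ ∈ Z, ζ ∈ V z₀ ∧
      ((∃ (n : ℕ) (α : ℕ → Γ) (zs : ℕ → M) (g : ℕ → Γ),
          zs 0 = z₀ ∧ g 0 = 1 ∧ (∀ k, g (k + 1) = g k * α (k + 1)) ∧
          (∀ k, 1 ≤ k → k ≤ n →
            zs k ∈ Z ∧ α k ∈ L (zs (k - 1)) ∧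
            (g k)⁻¹ • ζ ∈ V (zs k) ∧ (Vh (zs (k - 1)) ∩ V (zs k)).Nonempty) ∧
          zs n ∈ P ∧ g n • zs n = ζ) ∨
       (∃ (α : ℕ → Γ) (zs : ℕ → M) (g : ℕ → Γ),
          zs 0 = z₀ ∧ g 0 = 1 ∧ (∀ k, g (k + 1) = g k * α (k + 1)) ∧
          ∀ k, 1 ≤ k →
            zs k ∈ Z ∧ α k ∈ L (zs (k - 1)) ∧
            (g k)⁻¹ • ζ ∈ V (zs k) ∧ (Vh (zs (k - 1)) ∩ V (zs k)).Nonempty)) := by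
  classical
  -- one step of the automaton
  have key : ∀ z x, z ∈ Z → x ∈ V z → ¬(z ∈ P ∧ x = z) →
      ∃ p : Γ × M, p.2 ∈ Z ∧ p.1 ∈ L z ∧ p.1⁻¹ • x ∈ V p.2 ∧ p.1⁻¹ • x ∈ Vh z := by
    intro z x hzZ hxV hnt
    by_cases hzP : z ∈ P
    · have hxne : x ≠ z := fun h => hnt ⟨hzP, h⟩
      rw [hparabolic z hzP, Set.mem_insert_iff] at hxV
      rcases hxV with h | h
      · exact absurd h hxne
      · rw [Set.mem_iUnion₂] at h
        obtain ⟨a, haL, hmem⟩ := h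
        rw [Set.mem_smul_set_iff_inv_smul_mem] at hmem
        obtain ⟨z', hz'Z, hz'⟩ := hcover (a⁻¹ • x)
        exact ⟨(a, z'), hz'Z, haL, hz', hmem⟩
    · obtain ⟨a, haL, hVh⟩ := hconical z hzZ hzP
      obtain ⟨z', hz'Z, hz'⟩ := hcover (a⁻¹ • x)
      refine ⟨(a, z'), hz'Z, by rw [haL]; rfl, hz', ?_⟩
      rw [hVh]
      exact Set.smul_mem_smul_set hxV
  intro ζ
  obtain ⟨z₀, hz₀Z, hζ⟩ := hcover ζ
  refine ⟨z₀, hz₀Z, hζ, ?_⟩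
  -- the step function
  set step : M → M → Γ × M := fun z x =>
    if h : z ∈ Z ∧ x ∈ V z ∧ ¬(z ∈ P ∧ x = z) then (key z x h.1 h.2.1 h.2.2).choose
    else (1, z) with hstep_def
  -- the orbit sequence: (α_k, z_k, x_k)
  set s : ℕ → Γ × M × M := fun k => Nat.rec ((1 : Γ), z₀, ζ)
    (fun _ p => ((step p.2.1 p.2.2).1, (step p.2.1 p.2.2).2,
      (step p.2.1 p.2.2).1⁻¹ • p.2.2)) k with hs
  set α : ℕ → Γ := fun k => (s k).1 with hα
  set zs : ℕ → M := fun k => (s k).2.1 with hzs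
  set x : ℕ → M := fun k => (s k).2.2 with hx
  set g : ℕ → Γ := fun k => Nat.rec (1 : Γ) (fun k gk => gk * α (k + 1)) k with hg
  have hg0 : g 0 = 1 := rfl
  have hgsucc : ∀ k, g (k + 1) = g k * α (k + 1) := fun k => rfl
  have hzs0 : zs 0 = z₀ := rfl
  have hxsucc : ∀ k, x (k + 1) = (α (k + 1))⁻¹ • x k := fun k => rfl
  have hαsucc : ∀ k, α (k + 1) = (step (zs k) (x k)).1 := fun k => rfl
  have hzssucc : ∀ k, zs (k + 1) = (step (zs k) (x k)).2 := fun k => rfl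
  -- invariant
  have inv : ∀ k, zs k ∈ Z ∧ x k ∈ V (zs k) ∧ x k = (g k)⁻¹ • ζ := by
    intro k
    induction k with
    | zero => exact ⟨hz₀Z, hζ, by rw [hg0, inv_one, one_smul]; rfl⟩
    | succ k ih =>
      obtain ⟨hZ, hV, hgx⟩ := ih
      have hgx' : x (k + 1) = (g (k + 1))⁻¹ • ζ := by
        rw [hxsucc, hgsucc, hgx, mul_inv_rev, mul_smul]
      by_cases ht : ¬(zs k ∈ P ∧ x k = zs k)
      · have hstep : step (zs k) (x k) = (key (zs k) (x k) hZ hV ht).choose := by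
          rw [hstep_def]; exact dif_pos ⟨hZ, hV, ht⟩
        obtain ⟨h1, h2, h3, h4⟩ := (key (zs k) (x k) hZ hV ht).choose_spec
        refine ⟨?_, ?_, hgx'⟩
        · rw [hzssucc, hstep]; exact h1
        · rw [hzssucc, hxsucc, hαsucc, hstep]; exact h3
      · push_neg at ht
        have hstep : step (zs k) (x k) = (1, zs k) := by
          rw [hstep_def]; exact dif_neg (by tauto)
        refine ⟨?_, ?_, hgx'⟩
        · rw [hzssucc, hstep]; exact hZ
        · rw [hzssucc, hxsucc, hαsucc, hstep]; simpa using hV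
  -- step property at non-terminal states
  have stepprop : ∀ k, ¬(zs k ∈ P ∧ x k = zs k) →
      zs (k + 1) ∈ Z ∧ α (k + 1) ∈ L (zs k) ∧ x (k + 1) ∈ V (zs (k + 1)) ∧
      x (k + 1) ∈ Vh (zs k) := by
    intro k ht
    obtain ⟨hZ, hV, -⟩ := inv k
    have hstep : step (zs k) (x k) = (key (zs k) (x k) hZ hV ht).choose := by
      rw [hstep_def]; exact dif_pos ⟨hZ, hV, ht⟩
    obtain ⟨h1, h2, h3, h4⟩ := (key (zs k) (x k) hZ hV ht).choose_spec
    refine ⟨?_, ?_, ?_, ?_⟩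
    · rw [hzssucc, hstep]; exact h1
    · rw [hαsucc, hstep]; exact h2
    · rw [hzssucc, hxsucc, hαsucc, hstep]; exact h3
    · rw [hxsucc, hαsucc, hstep]; exact h4
  by_cases hterm : ∃ n, zs n ∈ P ∧ x n = zs n
  · left
    set n := Nat.find hterm with hn
    obtain ⟨hnP, hnx⟩ := Nat.find_spec hterm
    refine ⟨n, α, zs, g, hzs0, hg0, hgsucc, ?_, hnP, ?_⟩
    · intro k hk1 hkn
      obtain ⟨j, rfl⟩ : ∃ j, k = j + 1 := ⟨k - 1, (Nat.succ_pred_eq_of_pos hk1).symm⟩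
      have hj : j < n := hkn
      have hnt : ¬(zs j ∈ P ∧ x j = zs j) := Nat.find_min hterm hj
      obtain ⟨h1, h2, h3, h4⟩ := stepprop j hnt
      obtain ⟨-, -, hgx⟩ := inv (j + 1)
      refine ⟨h1, ?_, ?_, ⟨x (j + 1), h4, h3⟩⟩
      · simpa using h2
      · rw [← hgx]; exact h3
    · obtain ⟨-, -, hgx⟩ := inv n
      rw [← hnx, hgx, smul_inv_smul]
  · right
    push_neg at hterm
    refine ⟨α, zs, g, hzs0, hg0, hgsucc, ?_⟩
    intro k hk1
    obtain ⟨j, rfl⟩ : ∃ j, k = j + 1 := ⟨k - 1, (Nat.succ_pred_eq_of_pos hk1).symm⟩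
    have hnt : ¬(zs j ∈ P ∧ x j = zs j) := by
      intro ⟨h1, h2⟩; exact hterm j h1 h2
    obtain ⟨h1, h2, h3, h4⟩ := stepprop j hnt
    obtain ⟨-, -, hgx⟩ := inv (j + 1)
    refine ⟨h1, ?_, ?_, ⟨x (j + 1), h4, h3⟩⟩
    · simpa using h2
    · rw [← hgx]; exact h3
end

section
/- Let Γ be a group acting on a set M, let Z be a finite set, and let W : Z → (subsets of M) be given. Let (z_k)_{k≥0} be a sequence in Z, (α_k)_{k≥1} a sequence in Γ, let g_0 ∈ Γ, and set g_k := g_0·α_1⋯α_k for k ≥ 1. Assume that for every k ≥ 0 the inclusion α_{k+1}·W(z_{k+1}) ⊆ W(z_k) holds and is proper (the two sets are not equal). Then: (1) for every k ≥ 0, g_{k+1}·W(z_{k+1}) is properly contained in g_k·W(z_k); and (2) for every γ ∈ Γ, the set {k ≥ 0 : g_k = γ} has at most |Z| elements. (Lemma 4.8, 'Bounded backtracking I'.) -/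
open Pointwise

/-- Lemma 4.8 ('Bounded backtracking I'): if each `α_{k+1} • W(z_{k+1})` is properly
contained in `W(z_k)`, then the translated sets `g_k • W(z_k)` are properly nested,
and no element of the path sequence `g_k` is repeated more than `|Z|` times. -/
theorem bounded_backtracking_I
    {Γ M Z : Type*} [Group Γ] [MulAction Γ M] [Fintype Z]
    (W : Z → Set M) (z : ℕ → Z) (α : ℕ → Γ) (g : ℕ → Γ)
    (hg : ∀ k : ℕ, g (k + 1) = g k * α (k + 1))
    (hnest : ∀ k : ℕ, α (k + 1) • W (z (k + 1)) ⊂ W (z k)) :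
    (∀ k : ℕ, g (k + 1) • W (z (k + 1)) ⊂ g k • W (z k)) ∧
    (∀ γ : Γ, {k : ℕ | g k = γ}.Finite ∧ {k : ℕ | g k = γ}.ncard ≤ Fintype.card Z) := by
  have h1 : ∀ k : ℕ, g (k + 1) • W (z (k + 1)) ⊂ g k • W (z k) := by
    intro k
    rw [hg k, mul_smul]
    exact ⟨Set.smul_set_subset_smul_set_iff.mpr (hnest k).subset,
      fun h => (hnest k).not_subset (Set.smul_set_subset_smul_set_iff.mp h)⟩
  refine ⟨h1, fun γ => ?_⟩
  have hanti : StrictAnti (fun k => g k • W (z k)) :=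
    strictAnti_nat_of_succ_lt fun k => h1 k
  have hinj : Set.InjOn z {k : ℕ | g k = γ} := by
    intro a ha b hb hab
    by_contra hne
    rcases lt_or_gt_of_ne hne with h | h
    · have := hanti h
      simp only [Set.mem_setOf_eq] at ha hb
      simp only [ha, hb, hab] at this
      exact lt_irrefl _ this
    · have := hanti h
      simp only [Set.mem_setOf_eq] at ha hb
      simp only [ha, hb, hab] at this
      exact lt_irrefl _ this
  have himg : (z '' {k : ℕ | g k = γ}).Finite := Set.toFinite _
  have hfin : {k : ℕ | g k = γ}.Finite := Set.Finite.of_finite_image himg hinj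
  refine ⟨hfin, ?_⟩
  calc {k : ℕ | g k = γ}.ncard = (z '' {k : ℕ | g k = γ}).ncard :=
        (Set.ncard_image_of_injOn hinj).symm
    _ ≤ (Set.univ : Set Z).ncard := Set.ncard_le_ncard (Set.subset_univ _) (Set.toFinite _)
    _ = Fintype.card Z := by simp [Set.ncard_univ, Nat.card_eq_fintype_card]
end

section
/- Let G be a group acting by homeomorphisms on a Hausdorff topological space M. For any finite subset F ⊆ G and any finitary point coders Q and Q' for the action, there exists N ∈ ℕ with the following property. Suppose (g₀, c) is a generalized Q'-coding of a point p ∈ M, with path sequence (g_k)_{k≥0} and terminal vertex sequence (z_k)_{k≥1}, and (h₀, d) is a generalized Q-coding of the same point p, with path sequence (h_k)_{k≥0} and terminal vertex sequence (y_k)_{k≥1}. Then for any indices m, n ≥ 1 satisfying g_n⁻¹h_m ∈ F, one has g_{n+N}·(closure of W(z_{n+N})) ⊆ h_m·W(y_m). (Lemma A.3, 'Uniform nesting for finitary point coders'.) -/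
open Pointwise Topology

/-- The partial product `Lab(e 0) * Lab(e 1) * ⋯ * Lab(e (n-1))` of the labels of
the first `n` edges of an edge path `e` (edges indexed from `0`, so `e k`
represents the `(k+1)`-st edge; `pathProd Lab e n = α_1 ⋯ α_n`). -/
def pathProd {E G : Type*} [Monoid G] (Lab : E → G) (e : ℕ → E) (n : ℕ) : G :=
  (List.map (Lab ∘ e) (List.range n)).prod

/-- A finitary point coder for the action of a group `G` on a topological space `M`:
a finite labeled directed graph whose vertices carry open sets, whose edges carry
group-element labels, such that translates along edges nest closures, and every
infinite directed edge path determines a point of `M` via a neighborhood basis. -/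
structure FinitaryPointCoder (G M : Type*) [Group G] [TopologicalSpace M]
    [MulAction G M] where
  V : Type
  E : Type
  finV : Finite V
  finE : Finite E
  ι : E → V
  τ : E → V
  W : V → Set M
  Lab : E → G
  open_W : ∀ v : V, IsOpen (W v)
  nest : ∀ e : E, Lab e • closure (W (τ e)) ⊆ W (ι e)
  codes : ∀ e : ℕ → E, (∀ k : ℕ, τ (e k) = ι (e (k + 1))) →
    ∃ p : M, (∀ n : ℕ, pathProd Lab e (n + 1) • W (τ (e n)) ∈ 𝓝 p) ∧
      ∀ U ∈ 𝓝 p, ∃ n : ℕ, pathProd Lab e (n + 1) • W (τ (e n)) ⊆ U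

/-- `e` is a strict `Q`-coding of `x`: an infinite directed edge path whose
translated vertex sets `(α_1 ⋯ α_n) • W(τ(e_n))` form a neighborhood basis of `x`. -/
def IsStrictCoding {G M : Type*} [Group G] [TopologicalSpace M] [MulAction G M]
    (Q : FinitaryPointCoder G M) (e : ℕ → Q.E) (x : M) : Prop :=
  (∀ k : ℕ, Q.τ (e k) = Q.ι (e (k + 1))) ∧
  (∀ n : ℕ, pathProd Q.Lab e (n + 1) • Q.W (Q.τ (e n)) ∈ 𝓝 x) ∧
  (∀ U ∈ 𝓝 x, ∃ n : ℕ, pathProd Q.Lab e (n + 1) • Q.W (Q.τ (e n)) ⊆ U)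

section AuxiliaryLemmas

theorem myPathProd_succ {E G : Type*} [Monoid G] (Lab : E → G) (e : ℕ → E) (n : ℕ) :
    pathProd Lab e (n + 1) = pathProd Lab e n * Lab (e n) := by
  simp [pathProd, List.range_succ]

theorem myPathProd_congr {E G : Type*} [Monoid G] (Lab : E → G) {e e' : ℕ → E} {n : ℕ}
    (h : ∀ i < n, e i = e' i) : pathProd Lab e n = pathProd Lab e' n := by
  induction n with
  | zero => rfl
  | succ n ih =>
    rw [myPathProd_succ, myPathProd_succ, ih (fun i hi => h i (by omega)), h n (by omega)]

theorem myPathProd_shift {E G : Type*} [Group G] (Lab : E → G) (e : ℕ → E) (n k : ℕ) :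
    pathProd Lab (fun j => e (n + j)) k = (pathProd Lab e n)⁻¹ * pathProd Lab e (n + k) := by
  induction k with
  | zero => simp [pathProd]
  | succ k ih =>
    rw [myPathProd_succ, ih, show n + (k+1) = (n+k)+1 from rfl, myPathProd_succ, mul_assoc]

variable {G M : Type*} [Group G] [TopologicalSpace M] [MulAction G M]

/-- The `k`-th translated vertex set along a path. -/
def setAt (R : FinitaryPointCoder G M) (e : ℕ → R.E) (k : ℕ) : Set M :=
  pathProd R.Lab e k • R.W (R.τ (e (k - 1)))

theorem setAt_congr (R : FinitaryPointCoder G M) {e e' : ℕ → R.E} {k : ℕ} (hk : 1 ≤ k)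
    (h : ∀ i < k, e i = e' i) : setAt R e k = setAt R e' k := by
  unfold setAt
  rw [myPathProd_congr R.Lab h, h (k - 1) (by omega)]

variable [ContinuousConstSMul G M]

theorem closure_setAt_succ (R : FinitaryPointCoder G M) {e : ℕ → R.E}
    (hp : ∀ k, R.τ (e k) = R.ι (e (k + 1))) {k : ℕ} (hk : 1 ≤ k) :
    closure (setAt R e (k + 1)) ⊆ setAt R e k := by
  unfold setAt
  rw [show k + 1 - 1 = k from rfl, myPathProd_succ, closure_smul, mul_smul]
  refine (Set.smul_set_mono (R.nest (e k))).trans ?_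
  rw [show R.ι (e k) = R.τ (e (k - 1)) from by rw [hp (k-1), Nat.sub_add_cancel hk]]

theorem setAt_anti (R : FinitaryPointCoder G M) {e : ℕ → R.E}
    (hp : ∀ k, R.τ (e k) = R.ι (e (k + 1))) {k l : ℕ} (hk : 1 ≤ k) (hkl : k ≤ l) :
    setAt R e l ⊆ setAt R e k := by
  induction l, hkl using Nat.le_induction with
  | base => exact subset_rfl
  | succ l hl ih =>
    exact (subset_closure.trans (closure_setAt_succ R hp (le_trans hk hl))).trans ih

theorem exists_uniform {G M : Type*} [Group G] [TopologicalSpace M] [T2Space M]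
    [MulAction G M] [ContinuousConstSMul G M]
    (Q Q' : FinitaryPointCoder G M) (f : G) (e' : Q.E) :
    ∃ N : ℕ, ∀ (e : ℕ → Q'.E) (pe : M),
      (∀ k, Q'.τ (e k) = Q'.ι (e (k + 1))) →
      (∀ k, setAt Q' e (k + 1) ∈ 𝓝 pe) →
      (∀ U ∈ 𝓝 pe, ∃ k, setAt Q' e (k + 1) ⊆ U) →
      pe ∈ (f * Q.Lab e') • closure (Q.W (Q.τ e')) →
      closure (setAt Q' e (N + 1)) ⊆ f • Q.W (Q.ι e') := by
  by_contra hcon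
  push_neg at hcon
  choose eN peN hpathN hmemN hbasisN hKN hfailN using hcon
  choose qN hq1 hq2 using fun N => Set.not_subset.mp (hfailN N)
  letI : TopologicalSpace Q'.E := ⊥
  haveI : DiscreteTopology Q'.E := ⟨rfl⟩
  haveI := Q'.finE
  haveI : FirstCountableTopology Q'.E := ⟨fun a => by rw [nhds_discrete]; infer_instance⟩
  obtain ⟨a, φ, hφ, hconv⟩ := CompactSpace.tendsto_subseq eN
  have hcoord : ∀ i, ∀ᶠ j in Filter.atTop, eN (φ j) i = a i := by
    intro i
    have h := tendsto_pi_nhds.mp hconv i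
    rw [nhds_discrete] at h
    exact Filter.tendsto_pure.mp h
  have hpre : ∀ K, ∀ᶠ j in Filter.atTop, ∀ i < K, eN (φ j) i = a i := by
    intro K
    induction K with
    | zero => simp
    | succ K ih =>
      filter_upwards [ih, hcoord K] with j h1 h2 i hi
      rcases Nat.lt_succ_iff_lt_or_eq.mp hi with h | h
      · exact h1 i h
      · rw [h]; exact h2
  have hpath_a : ∀ k, Q'.τ (a k) = Q'.ι (a (k + 1)) := by
    intro k
    obtain ⟨j, hj⟩ := (hpre (k + 2)).exists
    rw [← hj k (by omega), ← hj (k + 1) (by omega)]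
    exact hpathN (φ j) k
  obtain ⟨pa, hpamem, hpabasis⟩ := Q'.codes a hpath_a
  have hpabasis' : ∀ U ∈ 𝓝 pa, ∃ n : ℕ, setAt Q' a (n + 1) ⊆ U := hpabasis
  set T : Set M := f • Q.W (Q.ι e') with hT
  have hTopen : IsOpen T := (Q.open_W _).smul f
  set K : Set M := (f * Q.Lab e') • closure (Q.W (Q.τ e')) with hK
  have hKclosed : IsClosed K := isClosed_closure.smul _
  have hKT : K ⊆ T := by
    rw [hK, hT, mul_smul]
    exact Set.smul_set_mono (Q.nest e')
  have hpe_tendsto : Filter.Tendsto (fun j => peN (φ j)) Filter.atTop (𝓝 pa) := by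
    refine Filter.tendsto_def.mpr fun U hU => ?_
    obtain ⟨n, hn⟩ := hpabasis' U hU
    filter_upwards [hpre (n + 1)] with j hj
    have heq : setAt Q' (eN (φ j)) (n + 1) = setAt Q' a (n + 1) :=
      setAt_congr Q' (by omega) hj
    exact hn (heq ▸ mem_of_mem_nhds (hmemN (φ j) n))
  have hpaK : pa ∈ K :=
    hKclosed.mem_of_tendsto hpe_tendsto (Filter.Eventually.of_forall fun j => hKN (φ j))
  have hq_tendsto : Filter.Tendsto (fun j => qN (φ j)) Filter.atTop (𝓝 pa) := by
    refine Filter.tendsto_def.mpr fun U hU => ?_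
    obtain ⟨n, hn⟩ := hpabasis' U hU
    filter_upwards [hpre (n + 1), Filter.eventually_ge_atTop (n + 1)] with j hj hjge
    have hφj : n + 1 ≤ φ j := le_trans hjge hφ.le_apply
    have h1 : closure (setAt Q' (eN (φ j)) (φ j + 1)) ⊆ setAt Q' (eN (φ j)) (φ j) :=
      closure_setAt_succ Q' (hpathN (φ j)) (by omega)
    have h2 : setAt Q' (eN (φ j)) (φ j) ⊆ setAt Q' (eN (φ j)) (n + 1) :=
      setAt_anti Q' (hpathN (φ j)) (by omega) hφj
    have heq : setAt Q' (eN (φ j)) (n + 1) = setAt Q' a (n + 1) :=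
      setAt_congr Q' (by omega) hj
    exact hn (heq ▸ h2 (h1 (hq1 (φ j))))
  have hpaT : pa ∈ Tᶜ :=
    (hTopen.isClosed_compl).mem_of_tendsto hq_tendsto
      (Filter.Eventually.of_forall fun j => hq2 (φ j))
  exact hpaT (hKT hpaK)

end AuxiliaryLemmas

/-- Lemma A.3 ('Uniform nesting for finitary point coders'). Here the pair
`(g₀, c)` is a generalized `Q'`-coding of `p = g₀ • x`, with path sequence
`g_k = g₀ * α_1 ⋯ α_k = g₀ * pathProd Q'.Lab c k` and terminal vertex sequence
`z_k = Q'.τ (c (k-1))` for `k ≥ 1`, and similarly for `(h₀, d)`. -/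
theorem uniform_nesting_for_point_coders
    {G M : Type*} [Group G] [TopologicalSpace M] [T2Space M]
    [MulAction G M] [ContinuousConstSMul G M]
    (F : Finset G) (Q Q' : FinitaryPointCoder G M) :
    ∃ N : ℕ, ∀ (p x y : M) (g₀ h₀ : G) (c : ℕ → Q'.E) (d : ℕ → Q.E),
      IsStrictCoding Q' c x → g₀ • x = p →
      IsStrictCoding Q d y → h₀ • y = p →
      ∀ m n : ℕ, 1 ≤ m → 1 ≤ n →
        (g₀ * pathProd Q'.Lab c n)⁻¹ * (h₀ * pathProd Q.Lab d m) ∈ F →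
        (g₀ * pathProd Q'.Lab c (n + N)) • closure (Q'.W (Q'.τ (c (n + N - 1)))) ⊆
          (h₀ * pathProd Q.Lab d m) • Q.W (Q.τ (d (m - 1))) := by
  classical
  choose Nf hNf using fun (f : G) (e' : Q.E) => exists_uniform Q Q' f e'
  haveI := Q.finE
  letI : Fintype Q.E := Fintype.ofFinite _
  refine ⟨(F.sup fun g => Finset.univ.sup (Nf g)) + 1, ?_⟩
  intro p x y g₀ h₀ c d hc hgx hd hhy m n hm hn hF
  set N₀ := F.sup fun g => Finset.univ.sup (Nf g) with hN₀
  set f := (g₀ * pathProd Q'.Lab c n)⁻¹ * (h₀ * pathProd Q.Lab d m) with hf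
  set e : ℕ → Q'.E := fun k => c (n + k) with he
  have hpath_e : ∀ k, Q'.τ (e k) = Q'.ι (e (k + 1)) := fun k => hc.1 (n + k)
  set pe : M := (pathProd Q'.Lab c n)⁻¹ • x with hpe
  have hmem_e : ∀ k, setAt Q' e (k + 1) ∈ 𝓝 pe := by
    intro k
    have h1 := hc.2.1 (n + k)
    show pathProd Q'.Lab e (k + 1) • Q'.W (Q'.τ (e (k + 1 - 1))) ∈ 𝓝 pe
    rw [he, myPathProd_shift, mul_smul]
    exact smul_mem_nhds_smul _ h1
  have hbasis_e : ∀ U ∈ 𝓝 pe, ∃ k, setAt Q' e (k + 1) ⊆ U := by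
    intro U hU
    have hU' : pathProd Q'.Lab c n • U ∈ 𝓝 x := by
      have h2 := smul_mem_nhds_smul (pathProd Q'.Lab c n) hU
      rwa [hpe, smul_inv_smul] at h2
    obtain ⟨j, hj⟩ := hc.2.2 _ hU'
    refine ⟨j, ?_⟩
    have h2 : setAt Q' c (n + j + 1) ⊆ setAt Q' c (j + 1) :=
      setAt_anti Q' hc.1 (by omega) (by omega)
    have h3 : setAt Q' c (j + 1) ⊆ pathProd Q'.Lab c n • U := hj
    have h4 : setAt Q' e (j + 1) = (pathProd Q'.Lab c n)⁻¹ • setAt Q' c (n + j + 1) := by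
      show pathProd Q'.Lab e (j + 1) • Q'.W (Q'.τ (e (j + 1 - 1))) = _
      rw [he, myPathProd_shift, mul_smul]
      rfl
    rw [h4]
    calc (pathProd Q'.Lab c n)⁻¹ • setAt Q' c (n + j + 1)
        ⊆ (pathProd Q'.Lab c n)⁻¹ • (pathProd Q'.Lab c n • U) :=
          Set.smul_set_mono (h2.trans h3)
      _ = U := inv_smul_smul _ _
  have hy : y ∈ pathProd Q.Lab d (m + 1) • Q.W (Q.τ (d m)) := mem_of_mem_nhds (hd.2.1 m)
  have hpe_eq : pe = ((g₀ * pathProd Q'.Lab c n)⁻¹ * h₀) • y := by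
    have hx : x = g₀⁻¹ • (h₀ • y) := by rw [hhy, ← hgx, inv_smul_smul]
    rw [hpe, hx, smul_smul, smul_smul, mul_inv_rev]
  have hpe_K : pe ∈ (f * Q.Lab (d m)) • closure (Q.W (Q.τ (d m))) := by
    have h5 : f * Q.Lab (d m)
        = ((g₀ * pathProd Q'.Lab c n)⁻¹ * h₀) * pathProd Q.Lab d (m + 1) := by
      rw [hf, myPathProd_succ]; group
    rw [h5, hpe_eq, mul_smul]
    exact Set.smul_mem_smul_set ((Set.smul_set_mono subset_closure) hy)
  have hle : Nf f (d m) ≤ N₀ := by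
    rw [hN₀]
    exact le_trans (Finset.le_sup (Finset.mem_univ (d m)))
      (Finset.le_sup (f := fun g => Finset.univ.sup (Nf g)) hF)
  have key : closure (setAt Q' e (N₀ + 1)) ⊆ f • Q.W (Q.ι (d m)) := by
    have hmono : setAt Q' e (N₀ + 1) ⊆ setAt Q' e (Nf f (d m) + 1) :=
      setAt_anti Q' hpath_e (by omega) (by omega)
    exact (closure_mono hmono).trans (hNf f (d m) e pe hpath_e hmem_e hbasis_e hpe_K)
  have hWι : Q.W (Q.ι (d m)) = Q.W (Q.τ (d (m - 1))) := by
    have h7 := hd.1 (m - 1)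
    rw [Nat.sub_add_cancel hm] at h7
    rw [h7]
  have hmain := Set.smul_set_mono (a := g₀ * pathProd Q'.Lab c n) key
  rw [smul_smul, hWι] at hmain
  have hgf : (g₀ * pathProd Q'.Lab c n) * f = h₀ * pathProd Q.Lab d m := by
    rw [hf]; group
  rw [hgf] at hmain
  have hLHS : (g₀ * pathProd Q'.Lab c n) • closure (setAt Q' e (N₀ + 1))
      = (g₀ * pathProd Q'.Lab c (n + N₀ + 1)) • closure (Q'.W (Q'.τ (c (n + N₀)))) := by
    have h6 : setAt Q' e (N₀ + 1)
        = ((pathProd Q'.Lab c n)⁻¹ * pathProd Q'.Lab c (n + N₀ + 1)) •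
            Q'.W (Q'.τ (c (n + N₀))) := by
      show pathProd Q'.Lab e (N₀ + 1) • Q'.W (Q'.τ (e (N₀ + 1 - 1))) = _
      rw [he, myPathProd_shift]
      rfl
    rw [h6, closure_smul, smul_smul]
    congr 1
    group
  rw [hLHS] at hmain
  have e1 : n + (N₀ + 1) = n + N₀ + 1 := by omega
  have e2 : n + (N₀ + 1) - 1 = n + N₀ := by omega
  rw [e2, e1]
  exact hmain
end

section
/- Let Γ be a group and (M, d) a compact metric space, and let ρ₀, ρ : Γ → Homeo(M) be two actions of Γ on M by homeomorphisms. Let D > 0 be a pair-separation constant for the action ρ₀. Suppose φ : M → M is a map (not assumed continuous) such that φ(ρ(g)(x)) = ρ₀(g)(φ(x)) for all g ∈ Γ and x ∈ M, and suppose there exists ε > 0 with 5ε ≤ D such that d(x, φ(x)) < ε for every x ∈ M. Then φ is continuous. (Abstract form of Lemma 5.14.) -/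
open Metric

/-- Abstract form of Lemma 5.14: an equivariant map `φ` of a compact metric space
`M` that moves points less than `ε`, with `5ε ≤ D` for a pair-separation constant
`D` of `ρ₀`, is continuous. The actions `ρ₀, ρ` by homeomorphisms are modelled as
homomorphisms into the permutations of `M` each of which acts continuously. -/
theorem phi_continuous
    {Γ M : Type*} [Group Γ] [MetricSpace M] [CompactSpace M]
    (ρ₀ ρ : Γ →* Equiv.Perm M)
    (hρ₀cont : ∀ g : Γ, Continuous (ρ₀ g)) (hρcont : ∀ g : Γ, Continuous (ρ g))
    (D : ℝ) (hD : 0 < D)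
    (hsep : ∀ x y : M, x ≠ y → ∃ g : Γ, D < dist (ρ₀ g x) (ρ₀ g y))
    (φ : M → M)
    (hequiv : ∀ (g : Γ) (x : M), φ (ρ g x) = ρ₀ g (φ x))
    (ε : ℝ) (hε : 0 < ε) (hεD : 5 * ε ≤ D)
    (hclose : ∀ x : M, dist x (φ x) < ε) :
    Continuous φ := by
  rw [continuous_iff_continuousAt]
  intro x
  apply tendsto_nhds_of_unique_mapClusterPt
  intro z hz
  by_contra hne
  -- z ≠ φ x, so separate ρ₀ g (φ x) and ρ₀ g z
  obtain ⟨g, hg⟩ := hsep (φ x) z (fun h => hne h.symm)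
  rw [dist_comm] at hg
  -- continuity of ρ₀ g at z : pick δ₁
  obtain ⟨δ₁, hδ₁, hδ₁'⟩ := Metric.continuous_iff.mp (hρ₀cont g) z ε hε
  -- continuity of ρ g at x : set of w with dist (ρ g w) (ρ g x) < ε is a nbhd of x
  have hU : {w : M | dist (ρ g w) (ρ g x) < ε} ∈ nhds x := by
    obtain ⟨δ₂, hδ₂, hδ₂'⟩ := Metric.continuous_iff.mp (hρcont g) x ε hε
    exact Filter.mem_of_superset (Metric.ball_mem_nhds x hδ₂) fun w hw => hδ₂' w hw
  -- frequently φ w ∈ ball z δ₁ along 𝓝 x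
  have hfreq : ∃ᶠ w in nhds x, φ w ∈ Metric.ball z δ₁ :=
    (mapClusterPt_iff_frequently.mp hz) _ (Metric.ball_mem_nhds z hδ₁)
  obtain ⟨w, hw1, hw2⟩ := (hfreq.and_eventually (Filter.eventually_of_mem hU (fun _ h => h))).exists
  -- now the chain of inequalities
  have h1 : dist (ρ₀ g z) (ρ₀ g (φ w)) < ε := by
    rw [dist_comm]; exact hδ₁' (φ w) hw1
  have h2 : dist (ρ₀ g (φ w)) (ρ g w) < ε := by
    rw [← hequiv g w, dist_comm]; exact hclose (ρ g w)
  have h3 : dist (ρ g w) (ρ g x) < ε := hw2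
  have h4 : dist (ρ g x) (ρ₀ g (φ x)) < ε := by
    rw [← hequiv g x]; exact hclose (ρ g x)
  have t1 := dist_triangle4 (ρ₀ g z) (ρ₀ g (φ w)) (ρ g w) (ρ g x)
  have t2 := dist_triangle (ρ₀ g z) (ρ g x) (ρ₀ g (φ x))
  linarith
end
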